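/- Let X be a Banach space and let (A_m)_{m∈ℤ} be a sequence of bounded linear operators on X admitting an exponential dichotomy with constants C, λ > 0. Let f_n : X → X (n ∈ ℤ) satisfy ‖f_n(x) − f_n(y)‖ ≤ c‖x − y‖ for all n, x, y, where 0 < c < (1−e^{−λ})/(2C(1+e^{−λ})); set F_n = A_n + f_n. If (x¹_n)_{n∈ℤ} and (x²_n)_{n∈ℤ} both satisfy x_{n+1} = F_n(x_n) for all n ∈ ℤ and sup_{n∈ℤ} ‖x¹_n − x²_n‖ < ∞, then x¹_n = x²_n for all n ∈ ℤ. -/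

import Mathlib

/-- The forward products `𝒜(m,n) = A_{m-1} ⋯ A_n` (equal to the identity when `m ≤ n`). -/
noncomputable def calA {X : Type*} [NormedAddCommGroup X] [NormedSpace ℝ X]
    (A : ℤ → X →L[ℝ] X) (m n : ℤ) : X →L[ℝ] X :=
  (List.range (m - n).toNat).foldl (fun B k => (A (n + (k : ℤ))).comp B)
    (ContinuousLinearMap.id ℝ X)

/-- The sequence `(A_m)_{m ∈ ℤ}` admits an exponential dichotomy with constants `C, lam > 0`.
For `m ≤ n`, the operator `𝒜(m,n)` (the inverse of `𝒜(n,m)` restricted to `Ker P_m`)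
is described implicitly: `w = 𝒜(m,n)(Id - P_n) x` iff `w ∈ Ker P_m` and
`𝒜(n,m) w = x - P_n x`. -/
def ExpDichotomy {X : Type*} [NormedAddCommGroup X] [NormedSpace ℝ X]
    (A : ℤ → X →L[ℝ] X) (C lam : ℝ) : Prop :=
  ∃ P : ℤ → X →L[ℝ] X,
    (∀ m, (P m).comp (P m) = P m) ∧
    (∀ m, (P (m + 1)).comp (A m) = (A m).comp (P m)) ∧
    (∀ m, Set.BijOn (A m) (LinearMap.ker (P m : X →ₗ[ℝ] X) : Set X)
      (LinearMap.ker (P (m + 1) : X →ₗ[ℝ] X) : Set X)) ∧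
    (∀ m n : ℤ, n ≤ m → ‖(calA A m n).comp (P n)‖ ≤ C * Real.exp (-lam * (m - n))) ∧
    (∀ m n : ℤ, m ≤ n → ∀ x w : X, w ∈ LinearMap.ker (P m : X →ₗ[ℝ] X) →
      calA A n m w = x - P n x → ‖w‖ ≤ C * Real.exp (-lam * (n - m)) * ‖x‖)

section
variable {X : Type*} [NormedAddCommGroup X] [NormedSpace ℝ X] (A : ℤ → X →L[ℝ] X)

lemma calA_of_le {m n : ℤ} (h : m ≤ n) : calA A m n = ContinuousLinearMap.id ℝ X := by
  unfold calA
  rw [Int.toNat_of_nonpos (by omega)]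
  rfl

lemma calA_self (n : ℤ) : calA A n n = ContinuousLinearMap.id ℝ X := calA_of_le A le_rfl

lemma calA_succ {m n : ℤ} (h : n ≤ m) : calA A (m + 1) n = (A m).comp (calA A m n) := by
  unfold calA
  have h1 : (m + 1 - n).toNat = (m - n).toNat + 1 := by omega
  have h3 : n + (m - n) ⊔ 0 = m := by omega
  rw [h1, List.range_succ]
  simp [h3]

lemma calA_comp {m k n : ℤ} (hnk : n ≤ k) (hkm : k ≤ m) :
    (calA A m k).comp (calA A k n) = calA A m n := by
  refine Int.le_induction (motive := fun m _ => (calA A m k).comp (calA A k n) = calA A m n) ?_ ?_ m hkm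
  · show (calA A k k).comp (calA A k n) = calA A k n
    rw [calA_self]; ext x; simp
  · intro m hm ih
    rw [calA_succ A (le_trans hnk hm), calA_succ A hm, ContinuousLinearMap.comp_assoc, ih]

end

section
variable {X : Type*} [NormedAddCommGroup X] [NormedSpace ℝ X]
variable (A P : ℤ → X →L[ℝ] X)

lemma calA_comm (hcomm : ∀ m, (P (m + 1)).comp (A m) = (A m).comp (P m))
    {m n : ℤ} (h : n ≤ m) : (P m).comp (calA A m n) = (calA A m n).comp (P n) := by
  refine Int.le_induction
    (motive := fun m _ => (P m).comp (calA A m n) = (calA A m n).comp (P n)) ?_ ?_ m h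
  · simp [calA_self]
  · intro m hm ih
    rw [calA_succ A hm, ← ContinuousLinearMap.comp_assoc, hcomm,
      ContinuousLinearMap.comp_assoc, ih, ContinuousLinearMap.comp_assoc]

lemma calA_bijOn
    (hbij : ∀ m, Set.BijOn (A m) (LinearMap.ker (P m : X →ₗ[ℝ] X) : Set X)
      (LinearMap.ker (P (m + 1) : X →ₗ[ℝ] X) : Set X))
    {m n : ℤ} (h : n ≤ m) :
    Set.BijOn (calA A m n) (LinearMap.ker (P n : X →ₗ[ℝ] X) : Set X) (LinearMap.ker (P m : X →ₗ[ℝ] X) : Set X) := by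
  refine Int.le_induction
    (motive := fun m _ => Set.BijOn (calA A m n) (LinearMap.ker (P n : X →ₗ[ℝ] X) : Set X)
      (LinearMap.ker (P m : X →ₗ[ℝ] X) : Set X)) ?_ ?_ m h
  · simp only [calA_self]
    exact Set.bijOn_id _ |>.congr (by intro x _; rfl)
  · intro m hm ih
    rw [calA_succ A hm]
    have := (hbij m).comp ih
    refine this.congr ?_
    intro x _
    rfl

end

section
variable {X : Type*} [NormedAddCommGroup X] [NormedSpace ℝ X]
variable (A : ℤ → X →L[ℝ] X)

lemma geom_bound {r : ℝ} (h0 : 0 ≤ r) (h1 : r < 1) (N : ℕ) :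
    ∑ k ∈ Finset.range N, r ^ k ≤ (1 - r)⁻¹ := by
  have h2 : (0:ℝ) < 1 - r := by linarith
  rw [geom_sum_eq h1.ne]
  rw [div_le_iff_of_neg (by linarith : r - 1 < 0)]
  have hrN : 0 ≤ r ^ N := pow_nonneg h0 N
  have h3 : (1 - r)⁻¹ * (r - 1) = -1 * ((1 - r)⁻¹ * (1 - r)) := by ring
  rw [h3, inv_mul_cancel₀ h2.ne']
  linarith

lemma traj (z g : ℤ → X) (hz : ∀ n, z (n + 1) = A n (z n) + g n) (n : ℤ) (N : ℕ) :
    z (n + N) = calA A (n + N) n (z n)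
      + ∑ k ∈ Finset.range N, calA A (n + N) (n + k + 1) (g (n + k)) := by
  induction N with
  | zero => simp [calA_self]
  | succ N ih =>
    have h1 : (n + (↑(N + 1) : ℤ)) = (n + (N:ℤ)) + 1 := by push_cast; ring
    rw [h1, hz (n + N), ih, map_add, map_sum, Finset.sum_range_succ]
    rw [calA_succ A (by omega : n ≤ n + (N:ℤ))]
    rw [show calA A (n + (N:ℤ) + 1) (n + (N:ℤ) + 1) = ContinuousLinearMap.id ℝ X from
      calA_self A _]
    have h3 : ∀ k ∈ Finset.range N,
        calA A ((n + (N:ℤ)) + 1) (n + (k:ℤ) + 1) (g (n + k))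
          = (A (n + (N:ℤ))) (calA A (n + (N:ℤ)) (n + (k:ℤ) + 1) (g (n + k))) := by
      intro k hk
      rw [calA_succ A (by simp only [Finset.mem_range] at hk; omega : n + (k:ℤ) + 1 ≤ n + (N:ℤ))]
      rfl
    rw [Finset.sum_congr rfl h3]
    simp only [ContinuousLinearMap.comp_apply, ContinuousLinearMap.id_apply]
    abel

end

section
variable {X : Type*} [NormedAddCommGroup X] [NormedSpace ℝ X]
variable (A P : ℤ → X →L[ℝ] X)

lemma calA_comm_apply (hcomm : ∀ m, (P (m + 1)).comp (A m) = (A m).comp (P m))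
    {m n : ℤ} (h : n ≤ m) (x : X) :
    P m (calA A m n x) = calA A m n (P n x) := by
  have h1 := ContinuousLinearMap.ext_iff.mp (calA_comm A P hcomm h) x
  simpa using h1

lemma calA_comp_apply {m k n : ℤ} (hnk : n ≤ k) (hkm : k ≤ m) (x : X) :
    calA A m k (calA A k n x) = calA A m n x := by
  have h1 := ContinuousLinearMap.ext_iff.mp (calA_comp A hnk hkm) x
  simpa using h1

lemma limit_bound {a b K r : ℝ} (h0 : 0 ≤ r) (h1 : r < 1)
    (h : ∀ N : ℕ, a ≤ b + K * r ^ N) : a ≤ b := by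
  have ht := Filter.Tendsto.const_add b
    ((tendsto_pow_atTop_nhds_zero_of_lt_one h0 h1).const_mul K)
  rw [mul_zero, add_zero] at ht
  exact ge_of_tendsto' ht h

lemma main_aux (C lam : ℝ) (hC : 0 < C) (hlam : 0 < lam)
    (hPP : ∀ m, (P m).comp (P m) = P m)
    (hcomm : ∀ m, (P (m + 1)).comp (A m) = (A m).comp (P m))
    (hbij : ∀ m, Set.BijOn (A m) (LinearMap.ker (P m : X →ₗ[ℝ] X) : Set X)
      (LinearMap.ker (P (m + 1) : X →ₗ[ℝ] X) : Set X))
    (hiii : ∀ m n : ℤ, n ≤ m → ‖(calA A m n).comp (P n)‖ ≤ C * Real.exp (-lam * (m - n)))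
    (hv : ∀ m n : ℤ, m ≤ n → ∀ x w : X, w ∈ LinearMap.ker (P m : X →ₗ[ℝ] X) →
      calA A n m w = x - P n x → ‖w‖ ≤ C * Real.exp (-lam * (n - m)) * ‖x‖)
    (c : ℝ) (hc : 0 < c)
    (hcsmall : c < (1 - Real.exp (-lam)) / (2 * C * (1 + Real.exp (-lam))))
    (z g : ℤ → X) (hzrec : ∀ n : ℤ, z (n + 1) = A n (z n) + g n)
    (M : ℝ) (hM : ∀ n : ℤ, ‖z n‖ ≤ M)
    (hsup : ∀ b : ℝ, (∀ n : ℤ, ‖z n‖ ≤ b) → M ≤ b)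
    (hg : ∀ n : ℤ, ‖g n‖ ≤ c * M) :
    ∀ n : ℤ, z n = 0 := by
  set r := Real.exp (-lam) with hrdef
  have hr0 : 0 < r := Real.exp_pos _
  have hr1 : r < 1 := by
    rw [hrdef, ← Real.exp_zero]
    exact Real.exp_lt_exp.mpr (by linarith)
  have h1r : 0 < 1 - r := by linarith
  have hM0 : 0 ≤ M := le_trans (norm_nonneg _) (hM 0)
  have hPidem : ∀ m (x : X), P m (P m x) = P m x := by
    intro m x
    have h1 := ContinuousLinearMap.ext_iff.mp (hPP m) x
    simpa using h1
  have hexp : ∀ (m n : ℤ) (N : ℕ), m - n = N → Real.exp (-lam * (↑m - ↑n)) = r ^ N := by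
    intro m n N hmn
    have h1 : ((m : ℝ) - (n : ℝ)) = (N : ℝ) := by
      have h2 := congrArg (Int.cast : ℤ → ℝ) hmn
      push_cast at h2
      linarith
    rw [h1, mul_comm, Real.exp_nat_mul, hrdef]
  -- operator norm bounds in r^N form
  have hSop : ∀ (m n : ℤ) (N : ℕ), m - n = N → ∀ u : X,
      ‖calA A m n (P n u)‖ ≤ C * r ^ N * ‖u‖ := by
    intro m n N hmn u
    have h1 := hiii m n (by omega)
    rw [hexp m n N hmn] at h1
    calc ‖calA A m n (P n u)‖ = ‖((calA A m n).comp (P n)) u‖ := rfl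
      _ ≤ ‖(calA A m n).comp (P n)‖ * ‖u‖ := ContinuousLinearMap.le_opNorm _ u
      _ ≤ C * r ^ N * ‖u‖ := mul_le_mul_of_nonneg_right h1 (norm_nonneg u)
  have hPnorm : ∀ m (u : X), ‖P m u‖ ≤ C * ‖u‖ := by
    intro m u
    have h1 := hSop m m 0 (by omega) u
    rw [calA_self] at h1
    simpa using h1
  have hvr : ∀ (m n : ℤ) (N : ℕ), n - m = N → ∀ x w : X, P m w = 0 →
      calA A n m w = x - P n x → ‖w‖ ≤ C * r ^ N * ‖x‖ := by
    intro m n N hmn x w hker heq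
    have h1 := hv m n (by omega) x w (by simpa [LinearMap.mem_ker] using hker) heq
    rwa [hexp n m N hmn] at h1
  -- stable bound
  have hstabN : ∀ (n : ℤ) (N : ℕ),
      ‖P n (z n)‖ ≤ c * C * M * (1 - r)⁻¹ + (C * M) * r ^ N := by
    intro n N
    set j := n - (N : ℤ) with hjdef
    have hjn : j + (N : ℤ) = n := by omega
    have htraj := traj A z g hzrec j N
    rw [hjn] at htraj
    have hPz : P n (z n) = calA A n j (P j (z j))
        + ∑ k ∈ Finset.range N, calA A n (j + k + 1) (P (j + k + 1) (g (j + k))) := by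
      rw [htraj, map_add, map_sum]
      congr 1
      · exact calA_comm_apply A P hcomm (by omega) (z j)
      · refine Finset.sum_congr rfl ?_
        intro k hk
        simp only [Finset.mem_range] at hk
        exact calA_comm_apply A P hcomm (by omega) (g (j + k))
    rw [hPz]
    calc ‖calA A n j (P j (z j)) + ∑ k ∈ Finset.range N,
            calA A n (j + k + 1) (P (j + k + 1) (g (j + k)))‖
        ≤ ‖calA A n j (P j (z j))‖ + ∑ k ∈ Finset.range N,
            ‖calA A n (j + k + 1) (P (j + k + 1) (g (j + k)))‖ :=
          le_trans (norm_add_le _ _) (by gcongr; exact norm_sum_le _ _)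
      _ ≤ (C * M) * r ^ N + ∑ k ∈ Finset.range N, (c * C * M) * r ^ (N - 1 - k) := by
          gcongr with k hk
          · calc ‖calA A n j (P j (z j))‖ ≤ C * r ^ N * ‖z j‖ := hSop n j N (by omega) (z j)
              _ ≤ C * r ^ N * M := by
                  have := hM j
                  gcongr
              _ = (C * M) * r ^ N := by ring
          · simp only [Finset.mem_range] at hk
            calc ‖calA A n (j + k + 1) (P (j + k + 1) (g (j + k)))‖
                ≤ C * r ^ (N - 1 - k) * ‖g (j + k)‖ :=
                  hSop n (j + k + 1) (N - 1 - k) (by omega) (g (j + k))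
              _ ≤ C * r ^ (N - 1 - k) * (c * M) := by
                  have := hg (j + k)
                  gcongr
              _ = (c * C * M) * r ^ (N - 1 - k) := by ring
      _ ≤ c * C * M * (1 - r)⁻¹ + (C * M) * r ^ N := by
          rw [← Finset.mul_sum]
          rw [Finset.sum_range_reflect (fun k => r ^ k) N]
          have hgeo := geom_bound hr0.le hr1 N
          have hcoef : 0 ≤ c * C * M := by positivity
          nlinarith [mul_le_mul_of_nonneg_left hgeo hcoef]
  have hstab : ∀ n : ℤ, ‖P n (z n)‖ ≤ c * C * M * (1 - r)⁻¹ :=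
    fun n => limit_bound hr0.le hr1 (hstabN n)
  -- unstable bound
  have hunstN : ∀ (n : ℤ) (N : ℕ),
      ‖z n - P n (z n)‖ ≤ c * C * M * r * (1 - r)⁻¹ + (C * (1 + C) * M) * r ^ N := by
    intro n N
    have hex : ∀ k : ℕ, ∃ wk : X, P n wk = 0 ∧
        calA A (n + k + 1) n wk = g (n + k) - P (n + k + 1) (g (n + k)) := by
      intro k
      have hb := calA_bijOn A P hbij (show n ≤ n + (k : ℤ) + 1 by omega)
      have hmem : g (n + k) - P (n + (k : ℤ) + 1) (g (n + k))
          ∈ (LinearMap.ker (P (n + (k : ℤ) + 1) : X →ₗ[ℝ] X) : Set X) := by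
        simp [LinearMap.mem_ker, map_sub, hPidem]
      obtain ⟨wk, hw1, hw2⟩ := hb.surjOn hmem
      refine ⟨wk, ?_, hw2⟩
      simpa [LinearMap.mem_ker] using hw1
    choose w hwker hweq using hex
    have hwbd : ∀ k : ℕ, ‖w k‖ ≤ (c * C * M) * r ^ (k + 1) := by
      intro k
      have h1 := hvr n (n + k + 1) (k + 1) (by omega) (g (n + k)) (w k) (hwker k) (hweq k)
      calc ‖w k‖ ≤ C * r ^ (k + 1) * ‖g (n + k)‖ := h1
        _ ≤ C * r ^ (k + 1) * (c * M) := by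
            have := hg (n + k)
            gcongr
        _ = (c * C * M) * r ^ (k + 1) := by ring
    set S := ∑ k ∈ Finset.range N, w k with hSdef
    have hSker : P n S = 0 := by
      rw [hSdef, map_sum]
      exact Finset.sum_eq_zero fun k _ => hwker k
    have htraj := traj A z g hzrec n N
    have hkey : calA A (n + N) n (z n - P n (z n) + S)
        = z (n + N) - P (n + N) (z (n + N)) := by
      rw [map_add, map_sub, hSdef, map_sum]
      have h1 : ∀ k ∈ Finset.range N, calA A (n + (N : ℤ)) n (w k)
          = calA A (n + N) (n + k + 1) (g (n + k))
            - P (n + N) (calA A (n + N) (n + k + 1) (g (n + k))) := by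
        intro k hk
        simp only [Finset.mem_range] at hk
        rw [← calA_comp_apply A (show n ≤ n + (k : ℤ) + 1 by omega)
          (show n + (k : ℤ) + 1 ≤ n + (N : ℤ) by omega) (w k), hweq k, map_sub]
        congr 1
        exact (calA_comm_apply A P hcomm (by omega) (g (n + k))).symm
      rw [Finset.sum_congr rfl h1, htraj]
      rw [show calA A (n + (N : ℤ)) n (P n (z n))
          = P (n + N) (calA A (n + N) n (z n)) from
        (calA_comm_apply A P hcomm (by omega) (z n)).symm]
      rw [Finset.sum_sub_distrib, map_add, map_sum]
      abel
    have hx0 : P (n + (N : ℤ)) (z (n + N) - P (n + N) (z (n + N))) = 0 := by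
      simp [map_sub, hPidem]
    have hwk0 : P n (z n - P n (z n) + S) = 0 := by
      simp [map_add, map_sub, hPidem, hSker]
    have hb1 := hvr n (n + N) N (by omega) (z (n + N) - P (n + N) (z (n + N)))
      (z n - P n (z n) + S) hwk0 (by rw [hkey, hx0, sub_zero])
    have hxbd : ‖z (n + (N : ℤ)) - P (n + N) (z (n + N))‖ ≤ (1 + C) * M := by
      calc ‖z (n + (N : ℤ)) - P (n + N) (z (n + N))‖
          ≤ ‖z (n + (N : ℤ))‖ + ‖P (n + N) (z (n + N))‖ := norm_sub_le _ _
        _ ≤ M + C * M := add_le_add (hM _) (le_trans (hPnorm _ _)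
            (mul_le_mul_of_nonneg_left (hM _) hC.le))
        _ = (1 + C) * M := by ring
    have hSbd : ‖S‖ ≤ c * C * M * r * (1 - r)⁻¹ := by
      calc ‖S‖ ≤ ∑ k ∈ Finset.range N, ‖w k‖ := norm_sum_le _ _
        _ ≤ ∑ k ∈ Finset.range N, (c * C * M) * r ^ (k + 1) :=
            Finset.sum_le_sum fun k _ => hwbd k
        _ = (c * C * M * r) * ∑ k ∈ Finset.range N, r ^ k := by
            rw [Finset.mul_sum]
            refine Finset.sum_congr rfl fun k _ => ?_
            ring
        _ ≤ c * C * M * r * (1 - r)⁻¹ := by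
            have hgeo := geom_bound hr0.le hr1 N
            have hcoef : 0 ≤ c * C * M * r := by positivity
            nlinarith [mul_le_mul_of_nonneg_left hgeo hcoef]
    calc ‖z n - P n (z n)‖ = ‖(z n - P n (z n) + S) - S‖ := by
          congr 1
          abel
      _ ≤ ‖z n - P n (z n) + S‖ + ‖S‖ := norm_sub_le _ _
      _ ≤ C * r ^ N * ((1 + C) * M) + (c * C * M * r * (1 - r)⁻¹) := by
          refine add_le_add (le_trans hb1 ?_) hSbd
          gcongr
      _ ≤ c * C * M * r * (1 - r)⁻¹ + (C * (1 + C) * M) * r ^ N := by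
          nlinarith [pow_nonneg hr0.le N]
  have hunst : ∀ n : ℤ, ‖z n - P n (z n)‖ ≤ c * C * M * r * (1 - r)⁻¹ :=
    fun n => limit_bound hr0.le hr1 (hunstN n)
  -- conclusion
  have hzbd : ∀ n : ℤ, ‖z n‖ ≤ (c * C * (1 + r) * (1 - r)⁻¹) * M := by
    intro n
    calc ‖z n‖ = ‖P n (z n) + (z n - P n (z n))‖ := by
          congr 1
          abel
      _ ≤ ‖P n (z n)‖ + ‖z n - P n (z n)‖ := norm_add_le _ _
      _ ≤ c * C * M * (1 - r)⁻¹ + c * C * M * r * (1 - r)⁻¹ :=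
          add_le_add (hstab n) (hunst n)
      _ = (c * C * (1 + r) * (1 - r)⁻¹) * M := by ring
  have hden : (0:ℝ) < 2 * C * (1 + r) := by positivity
  have h2 : c * (2 * C * (1 + r)) < 1 - r := (lt_div_iff₀ hden).mp hcsmall
  have hq1 : c * C * (1 + r) * (1 - r)⁻¹ < 1 := by
    rw [← div_eq_mul_inv, div_lt_one h1r]
    nlinarith
  have hMzero : M = 0 := by
    have hle : M ≤ (c * C * (1 + r) * (1 - r)⁻¹) * M := hsup _ hzbd
    nlinarith
  intro n
  have h3 := hM n
  rw [hMzero] at h3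
  exact norm_le_zero_iff.mp h3

end

/-- If `(A_m)_{m∈ℤ}` admits an exponential dichotomy with constants `C, lam > 0` and the `f_n`
are `c`-Lipschitz with `0 < c < (1-e^{-lam})/(2C(1+e^{-lam}))`, then two trajectories of
`x_{n+1} = A_n x_n + f_n(x_n)` which stay at bounded distance from each other coincide. -/
theorem dichotomy_bounded_trajectories_coincide
    {X : Type*} [NormedAddCommGroup X] [NormedSpace ℝ X] [CompleteSpace X]
    (A : ℤ → X →L[ℝ] X) (C lam : ℝ) (hC : 0 < C) (hlam : 0 < lam)
    (h : ExpDichotomy A C lam)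
    (f : ℤ → X → X) (c : ℝ) (hc : 0 < c)
    (hcsmall : c < (1 - Real.exp (-lam)) / (2 * C * (1 + Real.exp (-lam))))
    (hf : ∀ n : ℤ, ∀ x y : X, ‖f n x - f n y‖ ≤ c * ‖x - y‖)
    (x₁ x₂ : ℤ → X)
    (hx₁ : ∀ n : ℤ, x₁ (n + 1) = A n (x₁ n) + f n (x₁ n))
    (hx₂ : ∀ n : ℤ, x₂ (n + 1) = A n (x₂ n) + f n (x₂ n))
    (hbdd : BddAbove (Set.range fun n => ‖x₁ n - x₂ n‖)) :
    ∀ n : ℤ, x₁ n = x₂ n := by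
  obtain ⟨P, hPP, hcomm, hbij, hiii, hv⟩ := h
  set M := ⨆ n : ℤ, ‖x₁ n - x₂ n‖ with hMdef
  have hM : ∀ n : ℤ, ‖x₁ n - x₂ n‖ ≤ M := fun n => le_ciSup hbdd n
  have hsup : ∀ b : ℝ, (∀ n : ℤ, ‖x₁ n - x₂ n‖ ≤ b) → M ≤ b := fun b hb => ciSup_le hb
  have hzrec : ∀ n : ℤ, (fun m => x₁ m - x₂ m) (n + 1)
      = A n ((fun m => x₁ m - x₂ m) n) + (fun m => f m (x₁ m) - f m (x₂ m)) n := by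
    intro n
    simp only
    rw [hx₁, hx₂, map_sub]
    abel
  have hg : ∀ n : ℤ, ‖(fun m => f m (x₁ m) - f m (x₂ m)) n‖ ≤ c * M := fun n =>
    (hf n _ _).trans (mul_le_mul_of_nonneg_left (hM n) hc.le)
  have hz := main_aux A P C lam hC hlam hPP hcomm hbij hiii hv c hc hcsmall
    (fun m => x₁ m - x₂ m) (fun m => f m (x₁ m) - f m (x₂ m)) hzrec M hM hsup hg
  intro n
  have h2 := hz n
  exact sub_eq_zero.mp h2
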